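/- arXiv:2101.06207 — 2 statements merged into one kernel-verified Lean document; each statement's English description precedes it below -/
import Mathlib

section
/- Let $L(t) := \exp\left(\frac{\ln t}{\ln \ln t}\right)$ for $t > e$, and let $m(t) := \int_{t_0}^t \frac{K L(s)}{s}\,ds$ for a constant $K>0$ and fixed $t_0 > e$. Then for every $\alpha > 0$, $\lim_{t\to\infty} \frac{m(t/(\ln t)^{\alpha})}{m(t)} = e^{-\alpha}$. -/
open Real Filter MeasureTheory Set

noncomputable def f0 (t : ℝ) : ℝ := Real.log t / Real.log (Real.log t)
noncomputable def g0 (t : ℝ) : ℝ := Real.exp (f0 t) * Real.log (Real.log t)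
noncomputable def h0 (t : ℝ) : ℝ :=
  (Real.log (Real.log t) - 1) / Real.log (Real.log t) + 1 / Real.log t
noncomputable def gd (t : ℝ) : ℝ := Real.exp (f0 t) / t * h0 t

lemma base_facts {s : ℝ} (hs : Real.exp (Real.exp 1) < s) :
    0 < s ∧ 1 < Real.log s ∧ 1 < Real.log (Real.log s) := by
  have h0 : (0:ℝ) < Real.exp (Real.exp 1) := Real.exp_pos _
  have hs0 : 0 < s := h0.trans hs
  have h1 : Real.exp 1 < Real.log s := by
    have := Real.log_lt_log h0 hs
    rwa [Real.log_exp] at this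
  have h2 : 1 < Real.log s := lt_trans (by have := Real.exp_one_gt_d9; linarith) h1
  refine ⟨hs0, h2, ?_⟩
  have := Real.log_lt_log (Real.exp_pos 1) h1
  rwa [Real.log_exp] at this

lemma hasDerivAt_f0 {s : ℝ} (hs : Real.exp (Real.exp 1) < s) :
    HasDerivAt f0 ((Real.log (Real.log s) - 1) / (s * (Real.log (Real.log s))^2)) s := by
  obtain ⟨hs0, hl1, hll1⟩ := base_facts hs
  have hlne : Real.log s ≠ 0 := by linarith
  have hllne : Real.log (Real.log s) ≠ 0 := by linarith
  have h1 : HasDerivAt Real.log s⁻¹ s := Real.hasDerivAt_log (ne_of_gt hs0)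
  have h2 : HasDerivAt (fun x => Real.log (Real.log x)) ((Real.log s)⁻¹ * s⁻¹) s :=
    (Real.hasDerivAt_log hlne).comp s h1
  have h3 := h1.div h2 hllne
  refine h3.congr_deriv ?_
  field_simp

lemma hasDerivAt_g0 {s : ℝ} (hs : Real.exp (Real.exp 1) < s) :
    HasDerivAt g0 (gd s) s := by
  obtain ⟨hs0, hl1, hll1⟩ := base_facts hs
  have hlne : Real.log s ≠ 0 := by linarith
  have hllne : Real.log (Real.log s) ≠ 0 := by linarith
  have h1 : HasDerivAt Real.log s⁻¹ s := Real.hasDerivAt_log (ne_of_gt hs0)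
  have h2 : HasDerivAt (fun x => Real.log (Real.log x)) ((Real.log s)⁻¹ * s⁻¹) s :=
    (Real.hasDerivAt_log hlne).comp s h1
  have hE : HasDerivAt (fun x => Real.exp (f0 x))
      (Real.exp (f0 s) * ((Real.log (Real.log s) - 1) / (s * (Real.log (Real.log s))^2))) s :=
    (hasDerivAt_f0 hs).exp
  have h3 := hE.mul h2
  refine h3.congr_deriv ?_
  unfold gd h0
  field_simp

lemma continuousAt_expf0 {s : ℝ} (hs : Real.exp (Real.exp 1) < s) :
    ContinuousAt (fun x => Real.exp (f0 x) / x) s := by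
  obtain ⟨hs0, hl1, hll1⟩ := base_facts hs
  exact (Real.continuous_exp.continuousAt.comp (hasDerivAt_f0 hs).continuousAt).div
    continuousAt_id (ne_of_gt hs0)

lemma continuousAt_gd {s : ℝ} (hs : Real.exp (Real.exp 1) < s) :
    ContinuousAt gd s := by
  obtain ⟨hs0, hl1, hll1⟩ := base_facts hs
  have hlne : Real.log s ≠ 0 := by linarith
  have hllne : Real.log (Real.log s) ≠ 0 := by linarith
  have hcl : ContinuousAt Real.log s := Real.continuousAt_log (ne_of_gt hs0)
  have hcll : ContinuousAt (fun x => Real.log (Real.log x)) s :=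
    (Real.continuousAt_log hlne).comp hcl
  have hch : ContinuousAt h0 s :=
    ((hcll.sub continuousAt_const).div hcll hllne).add
      (continuousAt_const.div hcl hlne)
  exact (continuousAt_expf0 hs).mul hch

lemma tendsto_loglog : Tendsto (fun t : ℝ => Real.log (Real.log t)) atTop atTop :=
  Real.tendsto_log_atTop.comp Real.tendsto_log_atTop

lemma tendsto_h0 : Tendsto h0 atTop (nhds 1) := by
  have h1 : Tendsto (fun t : ℝ => 1 - (Real.log (Real.log t))⁻¹ + (Real.log t)⁻¹) atTop
      (nhds 1) := by
    have := (tendsto_const_nhds (α := ℝ) (x := 1)).sub tendsto_loglog.inv_tendsto_atTop |>.add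
      Real.tendsto_log_atTop.inv_tendsto_atTop
    simpa using this
  refine h1.congr' ?_
  filter_upwards [tendsto_loglog.eventually_gt_atTop 1,
    Real.tendsto_log_atTop.eventually_gt_atTop 1] with t h1t h2t
  unfold h0
  have : Real.log (Real.log t) ≠ 0 := by linarith
  field_simp

lemma tendsto_g0 : Tendsto g0 atTop atTop := by
  refine tendsto_atTop_mono' _ ?_ tendsto_loglog
  filter_upwards [tendsto_loglog.eventually_gt_atTop 0,
    Real.tendsto_log_atTop.eventually_gt_atTop 0] with t ht ht2
  unfold g0
  have hf : 0 ≤ f0 t := div_nonneg ht2.le ht.le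
  nlinarith [Real.one_le_exp hf]

lemma base_facts' {s : ℝ} (hs : Real.exp 1 < s) :
    0 < s ∧ 1 < Real.log s ∧ 0 < Real.log (Real.log s) := by
  have h0 : (0:ℝ) < Real.exp 1 := Real.exp_pos _
  have hs0 : 0 < s := h0.trans hs
  have h1 : 1 < Real.log s := by
    have := Real.log_lt_log h0 hs
    rwa [Real.log_exp] at this
  exact ⟨hs0, h1, Real.log_pos h1⟩

lemma continuousAt_F {s : ℝ} (hs : Real.exp 1 < s) :
    ContinuousAt (fun x => Real.exp (f0 x) / x) s := by
  obtain ⟨hs0, hl1, hll0⟩ := base_facts' hs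
  have hcf : ContinuousAt f0 s :=
    (Real.continuousAt_log (ne_of_gt hs0)).div
      ((Real.continuousAt_log (by linarith)).comp (Real.continuousAt_log (ne_of_gt hs0)))
      (ne_of_gt hll0)
  exact (Real.continuous_exp.continuousAt.comp hcf).div continuousAt_id (ne_of_gt hs0)

set_option maxHeartbeats 1000000 in
lemma lemmaA (K t₀ : ℝ) (hK : 0 < K) (ht₀ : Real.exp 1 < t₀)
    (L m : ℝ → ℝ)
    (hL : ∀ t, Real.exp 1 < t → L t = Real.exp (Real.log t / Real.log (Real.log t)))
    (hm : ∀ t, m t = ∫ s in t₀..t, K * L s / s) :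
    Tendsto (fun t => m t / (K * g0 t)) atTop (nhds 1) := by
  -- rewrite m via continuous integrand
  have hmF : ∀ t, t₀ ≤ t → m t = ∫ s in t₀..t, K * (Real.exp (f0 s) / s) := by
    intro t ht
    rw [hm]
    apply intervalIntegral.integral_congr
    intro s hs
    rw [Set.uIcc_of_le ht] at hs
    have hse : Real.exp 1 < s := lt_of_lt_of_le ht₀ hs.1
    simp only [hL s hse, f0]
    ring
  -- integrability of F on intervals within [t₀, ∞)
  have hintF : ∀ a b : ℝ, t₀ ≤ a → t₀ ≤ b →
      IntervalIntegrable (fun s => K * (Real.exp (f0 s) / s)) volume a b := by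
    intro a b ha hb
    apply ContinuousOn.intervalIntegrable
    intro x hx
    have hx' : t₀ ≤ x := by
      rcases le_total a b with h | h
      · rw [Set.uIcc_of_le h] at hx; linarith [hx.1]
      · rw [Set.uIcc_of_ge h] at hx; linarith [hx.1]
    exact (continuousAt_const.mul (continuousAt_F (lt_of_lt_of_le ht₀ hx'))).continuousWithinAt
  rw [Metric.tendsto_nhds]
  intro ε hε
  set δ : ℝ := min (ε/2) (1/2) with hδdef
  have hδ0 : 0 < δ := lt_min (by linarith) (by norm_num)
  have hδh : δ ≤ 1/2 := min_le_right _ _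
  have hδε : δ ≤ ε/2 := min_le_left _ _
  -- eventual comparison of integrands
  have key : ∀ᶠ s in atTop, ((1-δ) * gd s ≤ Real.exp (f0 s) / s ∧
      Real.exp (f0 s) / s ≤ (1+δ) * gd s) ∧ max t₀ (Real.exp (Real.exp 1)) < s := by
    have h1 : (1:ℝ)/(1+δ) < 1 := by
      rw [div_lt_one (by linarith)]; linarith
    have h2 : (1:ℝ) < 1/(1-δ) := by
      rw [lt_div_iff₀ (by linarith)]; linarith
    have hh := tendsto_h0.eventually (Ioo_mem_nhds h1 h2)
    filter_upwards [hh, eventually_gt_atTop (max t₀ (Real.exp (Real.exp 1)))] with s hs hsE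
    have hsE' : Real.exp (Real.exp 1) < s := lt_of_le_of_lt (le_max_right _ _) hsE
    obtain ⟨hs0, hl1, hll1⟩ := base_facts hsE'
    have hpos : 0 < Real.exp (f0 s) / s := div_pos (Real.exp_pos _) hs0
    have hgd : gd s = Real.exp (f0 s) / s * h0 s := rfl
    obtain ⟨ha, hb⟩ := hs
    constructor
    · constructor
      · rw [hgd]
        rw [lt_div_iff₀ (by linarith : (0:ℝ) < 1 - δ)] at hb
        nlinarith
      · rw [hgd]
        rw [div_lt_iff₀ (by linarith : (0:ℝ) < 1 + δ)] at ha
        nlinarith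
    · exact hsE
  obtain ⟨s₁, hs₁⟩ := eventually_atTop.mp key
  have hs₁self := hs₁ s₁ le_rfl
  have hs₁t₀ : t₀ < s₁ := lt_of_le_of_lt (le_max_left _ _) hs₁self.2
  have hs₁E : Real.exp (Real.exp 1) < s₁ := lt_of_le_of_lt (le_max_right _ _) hs₁self.2
  set C : ℝ := |m s₁| + 2*K*|g0 s₁| with hCdef
  have hC0 : 0 ≤ C := by positivity
  have hεδ : 0 < ε - δ := by linarith
  filter_upwards [eventually_ge_atTop s₁,
    tendsto_g0.eventually_gt_atTop (max (C/(K*(ε-δ))) 1)] with t ht2 htg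
  have htg1 : 1 < g0 t := lt_of_le_of_lt (le_max_right _ _) htg
  have htgC : C/(K*(ε-δ)) < g0 t := lt_of_le_of_lt (le_max_left _ _) htg
  have hg0pos : 0 < g0 t := by linarith
  have ht : s₁ ≤ t := ht2
  have htt₀ : t₀ ≤ t := le_trans hs₁t₀.le ht
  -- m t - m s₁ = ∫_{s₁..t}
  have hsplit : m t = m s₁ + ∫ s in s₁..t, K * (Real.exp (f0 s) / s) := by
    rw [hmF t htt₀, hmF s₁ hs₁t₀.le]
    rw [intervalIntegral.integral_add_adjacent_intervals (hintF t₀ s₁ le_rfl hs₁t₀.le)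
      (hintF s₁ t hs₁t₀.le htt₀)]
  -- FTC
  have hftc : ∫ s in s₁..t, gd s = g0 t - g0 s₁ := by
    apply intervalIntegral.integral_eq_sub_of_hasDerivAt
    · intro x hx
      rw [Set.uIcc_of_le ht] at hx
      exact hasDerivAt_g0 (lt_of_lt_of_le hs₁E hx.1)
    · apply ContinuousOn.intervalIntegrable
      intro x hx
      rw [Set.uIcc_of_le ht] at hx
      exact (continuousAt_gd (lt_of_lt_of_le hs₁E hx.1)).continuousWithinAt
  have hintgd : IntervalIntegrable gd volume s₁ t := by
    apply ContinuousOn.intervalIntegrable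
    intro x hx
    rw [Set.uIcc_of_le ht] at hx
    exact (continuousAt_gd (lt_of_lt_of_le hs₁E hx.1)).continuousWithinAt
  -- bounds on the integral
  have hlow : K*(1-δ)*(g0 t - g0 s₁) ≤ ∫ s in s₁..t, K * (Real.exp (f0 s) / s) := by
    have := intervalIntegral.integral_mono_on ht
      ((hintgd.const_mul (K*(1-δ)))) (hintF s₁ t hs₁t₀.le htt₀)
      (fun x hx => by
        have h := (hs₁ x (hx.1)).1.1
        have : (1-δ) * gd x ≤ Real.exp (f0 x) / x := h
        calc K*(1-δ) * gd x = K * ((1-δ) * gd x) := by ring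
        _ ≤ K * (Real.exp (f0 x) / x) := by nlinarith)
    calc K*(1-δ)*(g0 t - g0 s₁) = K*(1-δ) * ∫ s in s₁..t, gd s := by rw [hftc]
    _ = ∫ s in s₁..t, K*(1-δ) * gd s := (intervalIntegral.integral_const_mul _ _).symm
    _ ≤ _ := this
  have hup : (∫ s in s₁..t, K * (Real.exp (f0 s) / s)) ≤ K*(1+δ)*(g0 t - g0 s₁) := by
    have := intervalIntegral.integral_mono_on ht
      (hintF s₁ t hs₁t₀.le htt₀) ((hintgd.const_mul (K*(1+δ))))
      (fun x hx => by
        have h := (hs₁ x (hx.1)).1.2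
        calc K * (Real.exp (f0 x) / x) ≤ K * ((1+δ) * gd x) := by nlinarith
        _ = K*(1+δ) * gd x := by ring)
    calc (∫ s in s₁..t, K * (Real.exp (f0 s) / s)) ≤ ∫ s in s₁..t, K*(1+δ) * gd s := this
    _ = K*(1+δ) * ∫ s in s₁..t, gd s := intervalIntegral.integral_const_mul _ _
    _ = K*(1+δ)*(g0 t - g0 s₁) := by rw [hftc]
  -- arithmetic
  have habs : |m t - K * g0 t| ≤ C + K*δ*(g0 t) := by
    have h1 := le_abs_self (m s₁)
    have h2 := neg_abs_le (m s₁)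
    have hk2 : 0 ≤ K*(1+δ) := by positivity
    have hk3 : 0 ≤ K*(1-δ) := by nlinarith
    have e1 : K*(1+δ)*(-(g0 s₁)) ≤ K*(1+δ)*|g0 s₁| :=
      mul_le_mul_of_nonneg_left (neg_le_abs (g0 s₁)) hk2
    have e2 : K*(1+δ)*|g0 s₁| ≤ 2*K*|g0 s₁| :=
      mul_le_mul_of_nonneg_right (by nlinarith) (abs_nonneg _)
    have e3 : K*(1-δ)*(g0 s₁) ≤ K*(1-δ)*|g0 s₁| :=
      mul_le_mul_of_nonneg_left (le_abs_self (g0 s₁)) hk3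
    have e4 : K*(1-δ)*|g0 s₁| ≤ 2*K*|g0 s₁| :=
      mul_le_mul_of_nonneg_right (by nlinarith) (abs_nonneg _)
    rw [abs_le]
    constructor
    · nlinarith [hsplit, hlow]
    · nlinarith [hsplit, hup]
  rw [Real.dist_eq]
  have heq : m t / (K * g0 t) - 1 = (m t - K * g0 t) / (K * g0 t) := by
    field_simp
  rw [heq, abs_div, abs_of_pos (by positivity : (0:ℝ) < K * g0 t)]
  rw [div_lt_iff₀ (by positivity : (0:ℝ) < K * g0 t)]
  have hCbound : C < K*(ε-δ)*(g0 t) := by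
    rw [div_lt_iff₀ (by positivity)] at htgC
    nlinarith
  calc |m t - K * g0 t| ≤ C + K*δ*(g0 t) := habs
  _ < K*(ε-δ)*(g0 t) + K*δ*(g0 t) := by linarith
  _ = ε * (K * g0 t) := by ring

lemma log_u {α t : ℝ} (hα : 0 < α) (ht : Real.exp 1 < t) :
    0 < t / (Real.log t)^α ∧
    Real.log (t / (Real.log t)^α) = Real.log t - α * Real.log (Real.log t) := by
  have ht0 : (0:ℝ) < t := (Real.exp_pos 1).trans ht
  have hl1 : 1 < Real.log t := by
    have := Real.log_lt_log (Real.exp_pos 1) ht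
    rwa [Real.log_exp] at this
  have hlp : 0 < Real.log t := by linarith
  have hrp : 0 < (Real.log t)^α := Real.rpow_pos_of_pos hlp α
  refine ⟨div_pos ht0 hrp, ?_⟩
  rw [Real.log_div (ne_of_gt ht0) (ne_of_gt hrp), Real.log_rpow hlp]

lemma tendsto_ba : Tendsto (fun t : ℝ => Real.log (Real.log t) / Real.log t) atTop (nhds 0) :=
  (Real.isLittleO_log_id_atTop.tendsto_div_nhds_zero).comp Real.tendsto_log_atTop

lemma tendsto_u {α : ℝ} (hα : 0 < α) :
    Tendsto (fun t : ℝ => t / (Real.log t) ^ α) atTop atTop := by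
  have hw : Tendsto (fun t : ℝ => Real.log t - α * Real.log (Real.log t)) atTop atTop := by
    have h1 : Tendsto (fun t : ℝ => 1 - α * (Real.log (Real.log t) / Real.log t)) atTop
        (nhds 1) := by
      have := (tendsto_const_nhds (x := α)).mul tendsto_ba
      have h2 := (tendsto_const_nhds (x := (1:ℝ))).sub this
      simpa using h2
    have h3 := Real.tendsto_log_atTop.atTop_mul_pos (by norm_num : (0:ℝ) < 1) h1
    refine h3.congr' ?_
    filter_upwards [eventually_gt_atTop (Real.exp 1)] with t ht
    have hl1 : 1 < Real.log t := by
      have := Real.log_lt_log (Real.exp_pos 1) ht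
      rwa [Real.log_exp] at this
    field_simp
  have heq : ∀ᶠ t in atTop, Real.exp (Real.log t - α * Real.log (Real.log t))
      = t / (Real.log t)^α := by
    filter_upwards [eventually_gt_atTop (Real.exp 1)] with t ht
    obtain ⟨hu0, hlogu⟩ := log_u hα ht
    rw [← hlogu, Real.exp_log hu0]
  exact (Real.tendsto_exp_atTop.comp hw).congr' heq

lemma event_facts {α : ℝ} (hα : 0 < α) : ∀ᶠ t : ℝ in atTop,
    1 < Real.log t ∧ 1 < Real.log (Real.log t) ∧
    0 < 1 - α * (Real.log (Real.log t) / Real.log t) ∧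
    Real.log (t/(Real.log t)^α) = Real.log t - α * Real.log (Real.log t) ∧
    Real.log (Real.log (t/(Real.log t)^α))
      = Real.log (Real.log t) + Real.log (1 - α * (Real.log (Real.log t) / Real.log t)) ∧
    1 < Real.log (Real.log (t/(Real.log t)^α)) := by
  have hx0 : Tendsto (fun t : ℝ => α * (Real.log (Real.log t) / Real.log t)) atTop (nhds 0) := by
    have := (tendsto_const_nhds (x := α)).mul tendsto_ba
    simpa using this
  filter_upwards [eventually_gt_atTop (Real.exp 1),
    tendsto_loglog.eventually_gt_atTop 1,
    hx0.eventually_lt_const (by norm_num : (0:ℝ) < 1/2),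
    (tendsto_loglog.comp (tendsto_u hα)).eventually_gt_atTop 1] with t ht hb hxh hc1
  have ha : 1 < Real.log t := by
    have := Real.log_lt_log (Real.exp_pos 1) ht
    rwa [Real.log_exp] at this
  have hane : Real.log t ≠ 0 := by linarith
  obtain ⟨hu0, hlogu⟩ := log_u hα ht
  set x := α * (Real.log (Real.log t) / Real.log t) with hxdef
  have h1x : 0 < 1 - x := by linarith
  refine ⟨ha, hb, h1x, hlogu, ?_, hc1⟩
  have hfact : Real.log t - α * Real.log (Real.log t) = Real.log t * (1 - x) := by
    rw [hxdef]
    field_simp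
  rw [hlogu, hfact, Real.log_mul hane (ne_of_gt h1x)]

lemma lemmaB2 {α : ℝ} (hα : 0 < α) :
    Tendsto (fun t : ℝ => Real.log (Real.log (t / (Real.log t) ^ α)) / Real.log (Real.log t))
      atTop (nhds 1) := by
  have hx0 : Tendsto (fun t : ℝ => 1 - α * (Real.log (Real.log t) / Real.log t)) atTop
      (nhds 1) := by
    have := (tendsto_const_nhds (x := (1:ℝ))).sub ((tendsto_const_nhds (x := α)).mul tendsto_ba)
    simpa using this
  have hlog1x : Tendsto
      (fun t : ℝ => Real.log (1 - α * (Real.log (Real.log t) / Real.log t))) atTop (nhds 0) := by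
    have := (Real.continuousAt_log one_ne_zero).tendsto.comp hx0
    simpa [Function.comp_def] using this
  have hmain : Tendsto (fun t : ℝ =>
      1 + Real.log (1 - α * (Real.log (Real.log t) / Real.log t)) / Real.log (Real.log t))
      atTop (nhds 1) := by
    have := (tendsto_const_nhds (x := (1:ℝ))).add (hlog1x.div_atTop tendsto_loglog)
    simpa using this
  refine hmain.congr' ?_
  filter_upwards [event_facts hα] with t ⟨ha, hb, h1x, hlogu, hc, hc1⟩
  rw [hc]
  have hbne : Real.log (Real.log t) ≠ 0 := by linarith
  field_simp

lemma slope_log_one_sub :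
    Tendsto (fun y : ℝ => Real.log (1 - y) / y) (nhdsWithin 0 {0}ᶜ) (nhds (-1)) := by
  have hd : HasDerivAt (fun y : ℝ => Real.log (1 - y)) (-1) 0 := by
    have hin : HasDerivAt (fun y : ℝ => 1 - y) (-1) 0 := by
      simpa using (hasDerivAt_id' (0:ℝ)).const_sub 1
    have := (Real.hasDerivAt_log (by norm_num : (1:ℝ) - 0 ≠ 0)).comp 0 hin
    simpa [Function.comp_def] using this
  rw [hasDerivAt_iff_tendsto_slope] at hd
  refine hd.congr' ?_
  filter_upwards [self_mem_nhdsWithin] with y hy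
  simp [slope_def_field]

lemma lemmaB1 {α : ℝ} (hα : 0 < α) :
    Tendsto (fun t : ℝ => f0 (t / (Real.log t) ^ α) - f0 t) atTop (nhds (-α)) := by
  set x : ℝ → ℝ := fun t => α * (Real.log (Real.log t) / Real.log t) with hxdef
  have hx0 : Tendsto x atTop (nhds 0) := by
    have := (tendsto_const_nhds (x := α)).mul tendsto_ba
    simpa using this
  have hxpos : ∀ᶠ t in atTop, 0 < x t := by
    filter_upwards [eventually_gt_atTop (Real.exp 1), tendsto_loglog.eventually_gt_atTop 1]
      with t ht hb
    have ha : 1 < Real.log t := by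
      have := Real.log_lt_log (Real.exp_pos 1) ht
      rwa [Real.log_exp] at this
    have : 0 < Real.log (Real.log t) / Real.log t := div_pos (by linarith) (by linarith)
    exact mul_pos hα this
  have hxne : Tendsto x atTop (nhdsWithin 0 {0}ᶜ) := by
    apply tendsto_nhdsWithin_of_tendsto_nhds_of_eventually_within _ hx0
    filter_upwards [hxpos] with t ht
    exact ne_of_gt ht
  have hS : Tendsto (fun t => Real.log (1 - x t) / x t) atTop (nhds (-1)) :=
    slope_log_one_sub.comp hxne
  have hc : Tendsto (fun t : ℝ => Real.log (Real.log (t / (Real.log t) ^ α))) atTop atTop :=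
    tendsto_loglog.comp (tendsto_u hα)
  have hαc : Tendsto (fun t : ℝ => α / Real.log (Real.log (t / (Real.log t) ^ α))) atTop
      (nhds 0) := tendsto_const_nhds.div_atTop hc
  have hbc : Tendsto (fun t : ℝ =>
      Real.log (Real.log t) / Real.log (Real.log (t / (Real.log t) ^ α))) atTop (nhds 1) := by
    have := (lemmaB2 hα).inv₀ one_ne_zero
    simp only [inv_div, inv_one] at this
    exact this
  have hE : Tendsto (fun t : ℝ =>
      -((Real.log (1 - x t) / x t) * (α / Real.log (Real.log (t / (Real.log t) ^ α))))
      - α * (Real.log (Real.log t) / Real.log (Real.log (t / (Real.log t) ^ α))))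
      atTop (nhds (-α)) := by
    have := ((hS.mul hαc).neg).sub ((tendsto_const_nhds (x := α)).mul hbc)
    simpa using this
  refine hE.congr' ?_
  filter_upwards [event_facts hα, hxpos] with t ⟨ha, hb, h1x, hlogu, hcid, hc1⟩ hxp
  have hane : Real.log t ≠ 0 := by linarith
  have hbne : Real.log (Real.log t) ≠ 0 := by linarith
  have hcne : Real.log (Real.log (t / (Real.log t) ^ α)) ≠ 0 := by linarith
  have hxne' : x t ≠ 0 := ne_of_gt hxp
  have hlog1x : Real.log (1 - x t)
      = Real.log (Real.log (t / (Real.log t) ^ α)) - Real.log (Real.log t) := by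
    rw [hcid]
    simp only [hxdef]
    ring
  simp only [f0]
  set Cc := Real.log (Real.log (t / (Real.log t) ^ α)) with hCc
  rw [hlogu, hlog1x]
  have hxval : x t = α * (Real.log (Real.log t) / Real.log t) := by rw [hxdef]
  rw [hxval]
  have hαne : α ≠ 0 := ne_of_gt hα
  field_simp
  ring

theorem stmt_12 (K t₀ : ℝ) (hK : 0 < K) (ht₀ : Real.exp 1 < t₀)
    (L m : ℝ → ℝ)
    (hL : ∀ t, Real.exp 1 < t → L t = Real.exp (Real.log t / Real.log (Real.log t)))
    (hm : ∀ t, m t = ∫ s in t₀..t, K * L s / s) :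
    ∀ α : ℝ, 0 < α →
      Filter.Tendsto (fun t => m (t / (Real.log t) ^ α) / m t)
        Filter.atTop (nhds (Real.exp (-α))) := by
  intro α hα
  have hA := lemmaA K t₀ hK ht₀ L m hL hm
  have hu := tendsto_u hα
  have hAu : Tendsto
      (fun t : ℝ => m (t / (Real.log t) ^ α) / (K * g0 (t / (Real.log t) ^ α)))
      atTop (nhds 1) := hA.comp hu
  have hinv : Tendsto (fun t : ℝ => (K * g0 t) / m t) atTop (nhds 1) := by
    have := hA.inv₀ one_ne_zero
    simp only [inv_div, inv_one] at this
    exact this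
  have hG : Tendsto
      (fun t : ℝ => (K * g0 (t / (Real.log t) ^ α)) / (K * g0 t)) atTop
      (nhds (Real.exp (-α))) := by
    have hexp : Tendsto (fun t : ℝ => Real.exp (f0 (t / (Real.log t) ^ α) - f0 t)) atTop
        (nhds (Real.exp (-α))) := (Real.continuous_exp.tendsto (-α)).comp (lemmaB1 hα)
    have hmul := hexp.mul (lemmaB2 hα)
    rw [mul_one] at hmul
    refine hmul.congr' ?_
    filter_upwards [tendsto_loglog.eventually_gt_atTop 0,
      (tendsto_loglog.comp hu).eventually_gt_atTop 0] with t hb hc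
    have hbne : Real.log (Real.log t) ≠ 0 := ne_of_gt hb
    have hcne : Real.log (Real.log (t / (Real.log t) ^ α)) ≠ 0 := ne_of_gt hc
    simp only [g0, Real.exp_sub]
    field_simp
  have hprod := (hAu.mul hG).mul hinv
  rw [one_mul, mul_one] at hprod
  refine hprod.congr' ?_
  filter_upwards [tendsto_g0.eventually_gt_atTop 0,
    (tendsto_g0.comp hu).eventually_gt_atTop 0] with t hg hgu
  have h1 : K * g0 (t / (Real.log t) ^ α) ≠ 0 := by positivity
  have h2 : K * g0 t ≠ 0 := by positivity
  rcases eq_or_ne (m t) 0 with h | h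
  · simp [h]
  · field_simp
    exact mul_div_cancel_right₀ _ (ne_of_gt hgu)
end

section
/- Let $\alpha \in (0,1)$, $\beta \in (0, (1+\alpha)^{-1})$, and define a sequence $(\ell_k)_{k\ge0}$ by $\ell_{k+1} = \ell_k + \ln(1 + \ell_k^{-\alpha})$. Then there exists $\ell_0^* = \ell_0^*(\alpha,\beta)$ such that if $\ell_0 \ge \ell_0^*$ then $\ell_k \ge (\ell_0 + k)^{\beta}$ for all $k \ge 0$. -/
set_option maxHeartbeats 1000000 in
theorem stmt_14 (α β : ℝ) (hα : α ∈ Set.Ioo (0 : ℝ) 1)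
    (hβ : β ∈ Set.Ioo (0 : ℝ) (1 + α)⁻¹) :
    ∃ ℓstar : ℝ, ∀ ℓ : ℕ → ℝ, ℓ 0 ≥ ℓstar →
      (∀ k : ℕ, ℓ (k + 1) = ℓ k + Real.log (1 + (ℓ k) ^ (-α : ℝ))) →
      ∀ k : ℕ, ℓ k ≥ (ℓ 0 + k) ^ (β : ℝ) := by
  obtain ⟨hα0, hα1⟩ := hα
  obtain ⟨hβ0, hβ1⟩ := hβ
  have hβα : β * (1 + α) < 1 := by
    have h := mul_lt_mul_of_pos_right hβ1 (show (0:ℝ) < 1 + α by linarith)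
    rw [inv_mul_cancel₀ (by linarith)] at h
    exact h
  have hβ1' : β < 1 := by nlinarith
  set δ : ℝ := 1 - β * (1 + α) with hδdef
  have hδ : 0 < δ := by simp only [hδdef]; linarith
  refine ⟨max 2 ((4 * β) ^ (δ⁻¹ : ℝ)), fun ℓ h0 hrec => ?_⟩
  have h02 : (2 : ℝ) ≤ ℓ 0 := le_trans (le_max_left _ _) h0
  have h04 : (4 * β) ^ (δ⁻¹ : ℝ) ≤ ℓ 0 := le_trans (le_max_right _ _) h0
  intro k
  induction k with
  | zero =>
    simp only [Nat.cast_zero, add_zero, ge_iff_le]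
    calc ℓ 0 ^ (β : ℝ) ≤ ℓ 0 ^ (1 : ℝ) :=
          Real.rpow_le_rpow_of_exponent_le (by linarith) (by linarith)
      _ = ℓ 0 := Real.rpow_one _
  | succ k IH =>
    set n : ℝ := ℓ 0 + k with hn
    have hn2 : (2 : ℝ) ≤ n := by
      have : (0:ℝ) ≤ k := Nat.cast_nonneg k
      simp only [hn]; linarith
    have hn0 : (0 : ℝ) < n := by linarith
    have hgoal : (ℓ 0 + (k + 1 : ℕ) : ℝ) = n + 1 := by push_cast; simp [hn]; ring
    rw [hgoal]
    -- ℓ k ≥ 1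
    have hℓ1 : (1 : ℝ) ≤ ℓ k := by
      have : (1 : ℝ) ≤ n ^ (β : ℝ) := by
        calc (1:ℝ) = n ^ (0:ℝ) := (Real.rpow_zero n).symm
          _ ≤ n ^ (β:ℝ) := Real.rpow_le_rpow_of_exponent_le (by linarith) hβ0.le
      linarith [IH]
    have hℓ0 : (0 : ℝ) < ℓ k := by linarith
    set x : ℝ := ℓ k ^ (-α : ℝ) with hx
    have hx0 : 0 < x := Real.rpow_pos_of_pos hℓ0 _
    have hx1 : x ≤ 1 := Real.rpow_le_one_of_one_le_of_nonpos hℓ1 (by linarith)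
    -- log(1+x) ≥ x/2
    have hlog : x / 2 ≤ Real.log (1 + x) := by
      have h1 : Real.log ((1 + x)⁻¹) ≤ (1 + x)⁻¹ - 1 :=
        Real.log_le_sub_one_of_pos (by positivity)
      rw [Real.log_inv] at h1
      have h2 : 1 - (1 + x)⁻¹ = x / (1 + x) := by field_simp; ring
      have h3 : x / 2 ≤ x / (1 + x) := by gcongr ?_ / ?_ <;> linarith
      linarith
    by_cases hcase : (n + 1) ^ (β : ℝ) ≤ ℓ k
    · rw [hrec k]
      have : 0 ≤ Real.log (1 + x) := Real.log_nonneg (by linarith)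
      linarith
    · push_neg at hcase
      -- x ≥ (n+1)^(-(α*β))
      have hxlb : (n + 1) ^ (-(α * β) : ℝ) ≤ x := by
        have h1 : ((n + 1) ^ (β : ℝ)) ^ (-α : ℝ) ≤ ℓ k ^ (-α : ℝ) :=
          Real.rpow_le_rpow_of_nonpos hℓ0 hcase.le (by linarith)
        have h2 : ((n + 1) ^ (β : ℝ)) ^ (-α : ℝ) = (n + 1) ^ (-(α * β) : ℝ) := by
          rw [← Real.rpow_mul (by linarith)]; ring_nf
        rw [← h2]; exact h1
      -- (n+1)^(-(αβ)) ≥ (1/2) n^(-(αβ))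
      have hαβ1 : α * β < 1 := by nlinarith
      have h2n : (1 / 2 : ℝ) * n ^ (-(α * β) : ℝ) ≤ (n + 1) ^ (-(α * β) : ℝ) := by
        have h1 : (2 * n) ^ (-(α * β) : ℝ) ≤ (n + 1) ^ (-(α * β) : ℝ) :=
          Real.rpow_le_rpow_of_nonpos (by linarith) (by linarith) (by nlinarith)
        have h2 : (2 * n) ^ (-(α * β) : ℝ) = 2 ^ (-(α * β) : ℝ) * n ^ (-(α * β) : ℝ) :=
          Real.mul_rpow (by norm_num) hn0.le
        have h3 : (1 / 2 : ℝ) ≤ 2 ^ (-(α * β) : ℝ) := by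
          calc (1 / 2 : ℝ) = 2 ^ (-1 : ℝ) := by
                rw [Real.rpow_neg_one]; norm_num
            _ ≤ 2 ^ (-(α * β) : ℝ) :=
                Real.rpow_le_rpow_of_exponent_le one_le_two (by nlinarith)
        have h4 : (0:ℝ) ≤ n ^ (-(α * β) : ℝ) := (Real.rpow_pos_of_pos hn0 _).le
        nlinarith
      -- (n+1)^β ≤ n^β + β n^(β-1)
      have hupper : (n + 1) ^ (β : ℝ) ≤ n ^ (β : ℝ) + β * n ^ (β - 1 : ℝ) := by
        have h1 : (n + 1 : ℝ) = n * (1 + 1 / n) := by field_simp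
        have h2 : (n + 1) ^ (β : ℝ) = n ^ (β : ℝ) * (1 + 1 / n) ^ (β : ℝ) := by
          rw [h1, Real.mul_rpow hn0.le (by positivity)]
        have h3 : (1 + 1 / n) ^ (β : ℝ) ≤ 1 + β * (1 / n) :=
          rpow_one_add_le_one_add_mul_self (by have := one_div_pos.mpr hn0; linarith) hβ0.le hβ1'.le
        have h4 : n ^ (β : ℝ) * (1 / n) = n ^ (β - 1 : ℝ) := by
          rw [Real.rpow_sub hn0, Real.rpow_one]; ring
        have h5 : (0:ℝ) < n ^ (β : ℝ) := Real.rpow_pos_of_pos hn0 _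
        calc (n + 1) ^ (β : ℝ) = n ^ (β : ℝ) * (1 + 1 / n) ^ (β : ℝ) := h2
          _ ≤ n ^ (β : ℝ) * (1 + β * (1 / n)) := mul_le_mul_of_nonneg_left h3 h5.le
          _ = n ^ (β : ℝ) + β * (n ^ (β : ℝ) * (1 / n)) := by ring
          _ = n ^ (β : ℝ) + β * n ^ (β - 1 : ℝ) := by rw [h4]
      -- β n^(β-1) ≤ (1/4) n^(-(αβ))
      have hkey : β * n ^ (β - 1 : ℝ) ≤ (1 / 4 : ℝ) * n ^ (-(α * β) : ℝ) := by
        have h1 : n ^ (β - 1 : ℝ) = n ^ (-δ : ℝ) * n ^ (-(α * β) : ℝ) := by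
          rw [← Real.rpow_add hn0]; congr 1; simp only [hδdef]; ring
        have h2 : (4 * β : ℝ) ≤ n ^ (δ : ℝ) := by
          calc (4 * β : ℝ) = ((4 * β) ^ (δ⁻¹ : ℝ)) ^ (δ : ℝ) := by
                rw [← Real.rpow_mul (by linarith), inv_mul_cancel₀ hδ.ne', Real.rpow_one]
            _ ≤ n ^ (δ : ℝ) := by
                apply Real.rpow_le_rpow (Real.rpow_nonneg (by linarith) _) _ hδ.le
                linarith
        have h3 : n ^ (-δ : ℝ) = (n ^ (δ : ℝ))⁻¹ := by
          rw [Real.rpow_neg hn0.le]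
        have h4 : (0:ℝ) < n ^ (δ : ℝ) := Real.rpow_pos_of_pos hn0 _
        have h5 : β * n ^ (-δ : ℝ) ≤ 1 / 4 := by
          rw [h3]
          rw [mul_inv_le_iff₀ h4]
          linarith
        have h6 : (0:ℝ) < n ^ (-(α * β) : ℝ) := Real.rpow_pos_of_pos hn0 _
        calc β * n ^ (β - 1 : ℝ) = (β * n ^ (-δ : ℝ)) * n ^ (-(α * β) : ℝ) := by
              rw [h1]; ring
          _ ≤ (1 / 4) * n ^ (-(α * β) : ℝ) := mul_le_mul_of_nonneg_right h5 h6.le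
      -- combine
      rw [hrec k]
      have hchain : (1 / 4 : ℝ) * n ^ (-(α * β) : ℝ) ≤ Real.log (1 + x) := by
        have : (1 / 4 : ℝ) * n ^ (-(α * β) : ℝ) ≤ x / 2 := by linarith
        linarith
      linarith [IH]
end
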